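/- Tangent-line upper envelope of sine: for all x with |x| ≤ xᵐ where 0 < xᵐ < π, sin(x) ≤ cos(xᵐ/2)·(x − xᵐ/2) + sin(xᵐ/2). -/

import Mathlib

open Real

/-- If `f 0 = 0` and `f' ≥ 0` on `[0,∞)`, then `f ≥ 0` on `[0,∞)`. -/
lemma aux_nonneg {f f' : ℝ → ℝ} (hf : ∀ t, HasDerivAt f (f' t) t) (h0 : f 0 = 0)
    (hd : ∀ t, 0 ≤ t → 0 ≤ f' t) {t : ℝ} (ht : 0 ≤ t) : 0 ≤ f t := by
  have hm : MonotoneOn f (Set.Ici 0) := by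
    apply monotoneOn_of_deriv_nonneg (convex_Ici 0)
      (fun s _ => (hf s).continuousAt.continuousWithinAt)
      (fun s _ => (hf s).differentiableAt.differentiableWithinAt)
    intro s hs
    rw [(hf s).deriv]
    exact hd s (le_of_lt (by simpa using hs))
  have := hm Set.self_mem_Ici ht ht
  rw [h0] at this
  exact this

lemma sin_ge_cubic {t : ℝ} (ht : 0 ≤ t) : t - t ^ 3 / 6 ≤ Real.sin t := by
  have h := aux_nonneg (f := fun t => Real.sin t - (t - t ^ 3 / 6))
      (f' := fun t => Real.cos t - (1 - t ^ 2 / 2)) ?_ (by norm_num) ?_ ht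
  · linarith [h]
  · intro s
    have : HasDerivAt (fun t : ℝ => Real.sin t - (t - t ^ 3 / 6))
        (Real.cos s - (1 - (3 : ℕ) * s ^ 2 / 6)) s := by
      exact (Real.hasDerivAt_sin s).sub ((hasDerivAt_id s).sub ((hasDerivAt_pow 3 s).div_const 6))
    convert this using 1; push_cast; ring
  · intro s _
    have := Real.one_sub_sq_div_two_le_cos (x := s)
    linarith

lemma cos_le_quartic {t : ℝ} (ht : 0 ≤ t) : Real.cos t ≤ 1 - t ^ 2 / 2 + t ^ 4 / 24 := by
  have h := aux_nonneg (f := fun t => 1 - t ^ 2 / 2 + t ^ 4 / 24 - Real.cos t)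
      (f' := fun t => Real.sin t - (t - t ^ 3 / 6)) ?_ (by norm_num) ?_ ht
  · linarith [h]
  · intro s
    have : HasDerivAt (fun t : ℝ => 1 - t ^ 2 / 2 + t ^ 4 / 24 - Real.cos t)
        (0 - (2 : ℕ) * s ^ 1 / 2 + (4 : ℕ) * s ^ 3 / 24 - (-Real.sin s)) s := by
      exact (((hasDerivAt_const s (1 : ℝ)).sub ((hasDerivAt_pow 2 s).div_const 2)).add
        ((hasDerivAt_pow 4 s).div_const 24)).sub (Real.hasDerivAt_cos s)
    convert this using 1; push_cast; ring
  · intro s hs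
    have := sin_ge_cubic hs
    linarith

lemma sin_le_quintic {t : ℝ} (ht : 0 ≤ t) : Real.sin t ≤ t - t ^ 3 / 6 + t ^ 5 / 120 := by
  have h := aux_nonneg (f := fun t => t - t ^ 3 / 6 + t ^ 5 / 120 - Real.sin t)
      (f' := fun t => 1 - t ^ 2 / 2 + t ^ 4 / 24 - Real.cos t) ?_ (by norm_num) ?_ ht
  · linarith [h]
  · intro s
    have : HasDerivAt (fun t : ℝ => t - t ^ 3 / 6 + t ^ 5 / 120 - Real.sin t)
        (1 - (3 : ℕ) * s ^ 2 / 6 + (5 : ℕ) * s ^ 4 / 120 - Real.cos s) s := by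
      exact (((hasDerivAt_id s).sub ((hasDerivAt_pow 3 s).div_const 6)).add
        ((hasDerivAt_pow 5 s).div_const 120)).sub (Real.hasDerivAt_sin s)
    convert this using 1; push_cast; ring
  · intro s hs
    have := cos_le_quartic hs
    linarith

lemma cos_ge_sextic {t : ℝ} (ht : 0 ≤ t) :
    1 - t ^ 2 / 2 + t ^ 4 / 24 - t ^ 6 / 720 ≤ Real.cos t := by
  have h := aux_nonneg (f := fun t => Real.cos t - (1 - t ^ 2 / 2 + t ^ 4 / 24 - t ^ 6 / 720))
      (f' := fun t => (t - t ^ 3 / 6 + t ^ 5 / 120) - Real.sin t) ?_ (by norm_num) ?_ ht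
  · linarith [h]
  · intro s
    have : HasDerivAt (fun t : ℝ => Real.cos t - (1 - t ^ 2 / 2 + t ^ 4 / 24 - t ^ 6 / 720))
        ((-Real.sin s) - (0 - (2 : ℕ) * s ^ 1 / 2 + (4 : ℕ) * s ^ 3 / 24
          - (6 : ℕ) * s ^ 5 / 720)) s := by
      exact (Real.hasDerivAt_cos s).sub ((((hasDerivAt_const s (1 : ℝ)).sub
        ((hasDerivAt_pow 2 s).div_const 2)).add ((hasDerivAt_pow 4 s).div_const 24)).sub
        ((hasDerivAt_pow 6 s).div_const 720))
    convert this using 1; push_cast; ring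
  · intro s hs
    have := sin_le_quintic hs
    linarith

lemma sin_ge_septic {t : ℝ} (ht : 0 ≤ t) :
    t - t ^ 3 / 6 + t ^ 5 / 120 - t ^ 7 / 5040 ≤ Real.sin t := by
  have h := aux_nonneg
      (f := fun t => Real.sin t - (t - t ^ 3 / 6 + t ^ 5 / 120 - t ^ 7 / 5040))
      (f' := fun t => Real.cos t - (1 - t ^ 2 / 2 + t ^ 4 / 24 - t ^ 6 / 720)) ?_
      (by norm_num) ?_ ht
  · linarith [h]
  · intro s
    have : HasDerivAt (fun t : ℝ => Real.sin t - (t - t ^ 3 / 6 + t ^ 5 / 120 - t ^ 7 / 5040))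
        (Real.cos s - (1 - (3 : ℕ) * s ^ 2 / 6 + (5 : ℕ) * s ^ 4 / 120
          - (7 : ℕ) * s ^ 6 / 5040)) s := by
      exact (Real.hasDerivAt_sin s).sub ((((hasDerivAt_id s).sub
        ((hasDerivAt_pow 3 s).div_const 6)).add ((hasDerivAt_pow 5 s).div_const 120)).sub
        ((hasDerivAt_pow 7 s).div_const 5040))
    convert this using 1; push_cast; ring
  · intro s hs
    have := cos_ge_sextic hs
    linarith

/-- Key endpoint inequality: `sin a + sin 2a - 3a cos a ≥ 0` for `a ∈ [0, π/2]`. -/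
lemma key_F {a : ℝ} (h0 : 0 ≤ a) (h : a ≤ Real.pi / 2) :
    0 ≤ Real.sin a + Real.sin (2 * a) - 3 * a * Real.cos a := by
  have h2 : (0 : ℝ) ≤ 2 * a := by linarith
  have s1 := sin_ge_septic h0
  have s2 := sin_ge_septic h2
  have c := cos_le_quartic h0
  have hb : a ≤ 1.5708 := by
    have := Real.pi_lt_d4
    linarith
  have hsq : a ^ 2 ≤ 1.5708 ^ 2 := by nlinarith
  have hfive : 0 ≤ a ^ 5 := pow_nonneg h0 5
  nlinarith [mul_nonneg hfive (show (0 : ℝ) ≤ 3 / 20 - 129 / 5040 * a ^ 2 by nlinarith)]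

/-- `u * cos u ≤ sin u` for `0 ≤ u < π/2`. -/
lemma mul_cos_le_sin {u : ℝ} (h0 : 0 ≤ u) (h : u < Real.pi / 2) :
    u * Real.cos u ≤ Real.sin u := by
  rcases eq_or_lt_of_le h0 with rfl | hu
  · simp
  · have ht := Real.lt_tan hu h
    rw [Real.tan_eq_sin_div_cos] at ht
    have hc : 0 < Real.cos u := Real.cos_pos_of_mem_Ioo ⟨by linarith [Real.pi_pos], h⟩
    rw [lt_div_iff₀ hc] at ht
    exact ht.le

theorem stmt4 (xm x : ℝ) (h1 : 0 < xm) (h2 : xm < Real.pi) (h3 : |x| ≤ xm) :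
    Real.sin x ≤ Real.cos (xm / 2) * (x - xm / 2) + Real.sin (xm / 2) := by
  obtain ⟨hxl, hxr⟩ := abs_le.mp h3
  set a := xm / 2 with ha
  have ha0 : 0 < a := by positivity
  have hapi : a < Real.pi / 2 := by rw [ha]; linarith
  have hpi : 0 < Real.pi := Real.pi_pos
  have hca : 0 ≤ Real.cos a :=
    Real.cos_nonneg_of_mem_Icc ⟨by linarith, by linarith⟩
  have hxm : xm = 2 * a := by rw [ha]; ring
  rcases le_or_gt x (-a) with hc1 | hc1
  · -- x ∈ [-2a, -a] : monotonicity + endpoint inequality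
    have hder : ∀ y : ℝ, HasDerivAt
        (fun y => Real.cos a * (y - a) + Real.sin a - Real.sin y)
        (Real.cos a - Real.cos y) y := by
      intro y
      have hl : HasDerivAt (fun y : ℝ => Real.cos a * (y - a) + Real.sin a)
          (Real.cos a * 1) y :=
        (((hasDerivAt_id y).sub_const a).const_mul (Real.cos a)).add_const (Real.sin a)
      have h := hl.sub (Real.hasDerivAt_sin y); rw [mul_one] at h; exact h
    have hmono : MonotoneOn (fun y => Real.cos a * (y - a) + Real.sin a - Real.sin y)
        (Set.Icc (-(2 * a)) (-a)) := by
      apply monotoneOn_of_deriv_nonneg (convex_Icc _ _)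
        (fun s _ => (hder s).continuousAt.continuousWithinAt)
        (fun s _ => (hder s).differentiableAt.differentiableWithinAt)
      intro s hs
      rw [(hder s).deriv]
      rw [interior_Icc] at hs
      have hs1 : a ≤ -s := by linarith [hs.2]
      have hs2 : -s ≤ Real.pi := by linarith [hs.1]
      have := Real.cos_le_cos_of_nonneg_of_le_pi ha0.le hs2 hs1
      rw [Real.cos_neg] at this
      linarith
    have hmem1 : -(2 * a) ∈ Set.Icc (-(2 * a)) (-a) := ⟨le_refl _, by linarith⟩
    have hmem2 : x ∈ Set.Icc (-(2 * a)) (-a) := ⟨by linarith [hxl, hxm.symm ▸ hxl], hc1⟩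
    have hend := hmono hmem1 hmem2 (by rw [hxm] at hxl; exact hxl)
    have hF := key_F ha0.le hapi.le
    have hval : Real.cos a * (-(2 * a) - a) + Real.sin a - Real.sin (-(2 * a))
        = Real.sin a + Real.sin (2 * a) - 3 * a * Real.cos a := by
      rw [Real.sin_neg]; ring
    simp only at hend
    rw [hval] at hend
    linarith
  · rcases le_or_gt x a with hc2 | hc2
    · -- x ∈ [-a, a] : tangent above by convexity-style trig argument
      set u := (a - x) / 2 with hu
      set v := (a + x) / 2 with hv
      have hu0 : 0 ≤ u := by rw [hu]; linarith
      have hua : u ≤ a := by rw [hu]; linarith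
      have hv0 : 0 ≤ v := by rw [hv]; linarith
      have hva : v ≤ a := by rw [hv]; linarith
      have hsplit : Real.sin a - Real.sin x = 2 * Real.sin u * Real.cos v :=
        Real.sin_sub_sin a x
      have hcosa : Real.cos a = Real.cos u * Real.cos v - Real.sin u * Real.sin v := by
        rw [show a = u + v by rw [hu, hv]; ring, Real.cos_add]
      have hsu : 0 ≤ Real.sin u :=
        Real.sin_nonneg_of_nonneg_of_le_pi hu0 (by linarith)
      have hsv : 0 ≤ Real.sin v :=
        Real.sin_nonneg_of_nonneg_of_le_pi hv0 (by linarith)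
      have hcv : 0 ≤ Real.cos v :=
        Real.cos_nonneg_of_mem_Icc ⟨by linarith, by linarith⟩
      have htan : u * Real.cos u ≤ Real.sin u :=
        mul_cos_le_sin hu0 (lt_of_le_of_lt hua hapi)
      -- cos a ≤ cos u * cos v
      have hcle : Real.cos a ≤ Real.cos u * Real.cos v := by
        rw [hcosa]; nlinarith [mul_nonneg hsu hsv]
      -- 2 u cos a ≤ 2 sin u cos v
      have : (a - x) * Real.cos a ≤ Real.sin a - Real.sin x := by
        rw [hsplit]
        have h5 : (a - x) * Real.cos a = 2 * (u * Real.cos a) := by rw [hu]; ring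
        rw [h5]
        have h6 : u * Real.cos a ≤ u * (Real.cos u * Real.cos v) :=
          mul_le_mul_of_nonneg_left hcle hu0
        have h7 : u * Real.cos u * Real.cos v ≤ Real.sin u * Real.cos v :=
          mul_le_mul_of_nonneg_right htan hcv
        nlinarith
      linarith
    · -- x ∈ [a, 2a] : concavity-style trig argument
      set u := (x - a) / 2 with hu
      set v := (x + a) / 2 with hv
      have hu0 : 0 ≤ u := by rw [hu]; linarith
      have hxa : x ≤ 2 * a := by rw [hxm] at hxr; exact hxr
      have hua : u ≤ a := by rw [hu]; linarith
      have hva : a ≤ v := by rw [hv]; linarith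
      have hvpi : v ≤ Real.pi := by rw [hv]; nlinarith
      have hsplit : Real.sin x - Real.sin a = 2 * Real.sin u * Real.cos v :=
        Real.sin_sub_sin x a
      have hsu : 0 ≤ Real.sin u :=
        Real.sin_nonneg_of_nonneg_of_le_pi hu0 (by nlinarith)
      have hsule : Real.sin u ≤ u := Real.sin_le hu0
      have hcv : Real.cos v ≤ Real.cos a :=
        Real.cos_le_cos_of_nonneg_of_le_pi ha0.le hvpi hva
      have : Real.sin x - Real.sin a ≤ (x - a) * Real.cos a := by
        rw [hsplit]
        have h6 : Real.sin u * Real.cos v ≤ Real.sin u * Real.cos a :=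
          mul_le_mul_of_nonneg_left hcv hsu
        have h7 : Real.sin u * Real.cos a ≤ u * Real.cos a :=
          mul_le_mul_of_nonneg_right hsule hca
        have h8 : (x - a) * Real.cos a = 2 * (u * Real.cos a) := by rw [hu]; ring
        linarith
      linarith
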